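/- In the algebra Pol(ℂ)_q generated by z, z* with relation z*z = q²zz* + (1−q²) (where 0 < q < 1), the monomials z^j z*^k for j,k ∈ ℤ₊ form a basis of Pol(ℂ)_q as a complex vector space. -/

import Mathlib

/-- The defining relation of `Pol(ℂ)_q`: `z* z = q² z z* + (1 - q²)`.
Generator `0` is `z`, generator `1` is `z*`. -/
inductive PolRel (q : ℝ) : FreeAlgebra ℂ (Fin 2) → FreeAlgebra ℂ (Fin 2) → Prop
  | rel : PolRel q (FreeAlgebra.ι ℂ 1 * FreeAlgebra.ι ℂ 0)
      ((q ^ 2 : ℂ) • (FreeAlgebra.ι ℂ 0 * FreeAlgebra.ι ℂ 1) + ((1 : ℂ) - (q ^ 2 : ℂ)) • 1)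

/-- `Pol(ℂ)_q`, the unital ℂ-algebra with generators `z, z*` and the single
relation `z* z = q² z z* + 1 - q²`. -/
abbrev PolC (q : ℝ) : Type := RingQuot (PolRel q)

/-- The generator `z` of `Pol(ℂ)_q`. -/
noncomputable def Pz (q : ℝ) : PolC q := RingQuot.mkAlgHom ℂ (PolRel q) (FreeAlgebra.ι ℂ 0)

/-- The generator `z*` of `Pol(ℂ)_q`. -/
noncomputable def Pw (q : ℝ) : PolC q := RingQuot.mkAlgHom ℂ (PolRel q) (FreeAlgebra.ι ℂ 1)

noncomputable section
namespace PolAux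

abbrev B := (ℕ × ℕ) →₀ ℂ

def e (jk : ℕ × ℕ) : B := Finsupp.single jk 1

def Zop : B →ₗ[ℂ] B := Finsupp.lmapDomain ℂ ℂ (fun jk => (jk.1 + 1, jk.2))

def wvec (q : ℝ) (jk : ℕ × ℕ) : B :=
  ((q : ℂ) ^ (2 * jk.1)) • e (jk.1, jk.2 + 1) + (1 - (q : ℂ) ^ (2 * jk.1)) • e (jk.1 - 1, jk.2)

def Wop (q : ℝ) : B →ₗ[ℂ] B :=
  Finsupp.lsum ℂ fun jk => LinearMap.toSpanSingleton ℂ B (wvec q jk)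

lemma Zop_e (jk : ℕ × ℕ) : Zop (e jk) = e (jk.1 + 1, jk.2) := by
  simp [Zop, e, Finsupp.mapDomain_single]

lemma Wop_e (q : ℝ) (jk : ℕ × ℕ) : Wop q (e jk) = wvec q jk := by
  simp [Wop, e, LinearMap.toSpanSingleton_apply]

lemma rel_end (q : ℝ) :
    Wop q * Zop = ((q : ℂ) ^ 2) • (Zop * Wop q) + ((1 : ℂ) - (q : ℂ) ^ 2) • 1 := by
  apply Finsupp.lhom_ext
  intro jk c
  have h1 : Finsupp.single jk c = c • e jk := by simp [e, Finsupp.smul_single]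
  rcases jk with ⟨j, k⟩
  simp only [h1, Module.End.mul_apply, LinearMap.add_apply, LinearMap.smul_apply,
    Module.End.one_apply, map_smul]
  rw [Zop_e, Wop_e, Wop_e]
  simp only [wvec, map_add, map_smul, Zop_e]
  cases j with
  | zero =>
      simp [pow_succ, e]
  | succ n =>
      have : (n + 1 : ℕ) - 1 = n := rfl
      simp only [this, Nat.add_sub_cancel]
      have hp : (q:ℂ) ^ (2 * (n+1)) = (q:ℂ)^2 * (q:ℂ)^(2*n) := by ring_nf
      rw [hp]
      module

/-- The free-algebra map sending z ↦ Zop, z* ↦ Wop q. -/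
def f0 (q : ℝ) : FreeAlgebra ℂ (Fin 2) →ₐ[ℂ] Module.End ℂ B :=
  FreeAlgebra.lift ℂ ![Zop, Wop q]

lemma f0_rel (q : ℝ) : ∀ ⦃x y⦄, PolRel q x y → f0 q x = f0 q y := by
  rintro _ _ ⟨⟩
  simp only [f0, map_add, map_mul, map_smul, map_one, FreeAlgebra.lift_ι_apply,
    Matrix.cons_val_zero, Matrix.cons_val_one, Matrix.head_cons]
  have := rel_end q
  push_cast at this ⊢
  rw [this]

/-- The representation of `Pol(ℂ)_q` on `B`. -/
def rho (q : ℝ) : PolC q →ₐ[ℂ] Module.End ℂ B :=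
  RingQuot.liftAlgHom ℂ ⟨f0 q, f0_rel q⟩

lemma rho_Pz (q : ℝ) : rho q (Pz q) = Zop := by
  simp [rho, Pz, RingQuot.liftAlgHom_mkAlgHom_apply, f0, FreeAlgebra.lift_ι_apply]

lemma rho_Pw (q : ℝ) : rho q (Pw q) = Wop q := by
  simp [rho, Pw, RingQuot.liftAlgHom_mkAlgHom_apply, f0, FreeAlgebra.lift_ι_apply]

lemma Wop_pow_e00 (q : ℝ) (k : ℕ) : (Wop q ^ k) (e (0, 0)) = e (0, k) := by
  induction k with
  | zero => simp
  | succ n ih =>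
      rw [pow_succ', Module.End.mul_apply, ih, Wop_e]
      simp [wvec, e]

lemma Zop_pow_e (j : ℕ) (k : ℕ) : (Zop ^ j) (e (0, k)) = e (j, k) := by
  induction j with
  | zero => simp
  | succ n ih =>
      rw [pow_succ', Module.End.mul_apply, ih, Zop_e]

lemma rho_monomial (q : ℝ) (jk : ℕ × ℕ) :
    rho q (Pz q ^ jk.1 * Pw q ^ jk.2) (e (0, 0)) = e jk := by
  rw [map_mul, map_pow, map_pow, rho_Pz, rho_Pw, Module.End.mul_apply,
    Wop_pow_e00, Zop_pow_e]

lemma linind (q : ℝ) :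
    LinearIndependent ℂ (fun jk : ℕ × ℕ => Pz q ^ jk.1 * Pw q ^ jk.2) := by
  let L : PolC q →ₗ[ℂ] B :=
    (LinearMap.applyₗ (e (0, 0))).comp (rho q).toLinearMap
  apply LinearIndependent.of_comp L
  have hLe : (L ∘ fun jk : ℕ × ℕ => Pz q ^ jk.1 * Pw q ^ jk.2) = fun jk => e jk := by
    funext jk
    exact rho_monomial q jk
  rw [hLe]
  have := (Finsupp.basisSingleOne (R := ℂ) (ι := ℕ × ℕ)).linearIndependent
  simpa [e, Finsupp.coe_basisSingleOne] using this

/-- The relation in `Pol(ℂ)_q` itself. -/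
lemma rel_pol (q : ℝ) :
    Pw q * Pz q = ((q : ℂ) ^ 2) • (Pz q * Pw q) + ((1 : ℂ) - (q : ℂ) ^ 2) • 1 := by
  have h := RingQuot.mkAlgHom_rel ℂ (PolRel.rel (q := q))
  rw [map_mul, map_add, map_smul, map_smul, map_mul, map_one] at h
  push_cast at h ⊢
  exact h

lemma wz_pow (q : ℝ) (j : ℕ) :
    Pw q * Pz q ^ (j + 1) =
      ((q : ℂ) ^ (2 * (j + 1))) • (Pz q ^ (j + 1) * Pw q)
        + (1 - (q : ℂ) ^ (2 * (j + 1))) • Pz q ^ j := by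
  induction j with
  | zero => simpa using rel_pol q
  | succ n ih =>
      have h1 : Pw q * Pz q ^ (n + 2) = (Pw q * Pz q ^ (n + 1)) * Pz q := by
        rw [mul_assoc, ← pow_succ]
      rw [h1, ih, add_mul, smul_mul_assoc, smul_mul_assoc, mul_assoc, rel_pol q]
      have hp : (q : ℂ) ^ (2 * (n + 2)) = (q : ℂ) ^ (2 * (n + 1)) * (q : ℂ) ^ 2 := by
        ring_nf
      rw [hp]
      have h2 : Pz q ^ (n + 1) * (((q:ℂ) ^ 2) • (Pz q * Pw q) + ((1:ℂ) - (q:ℂ) ^ 2) • 1)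
          = ((q:ℂ) ^ 2) • (Pz q ^ (n + 2) * Pw q) + ((1:ℂ) - (q:ℂ) ^ 2) • Pz q ^ (n + 1) := by
        rw [mul_add, mul_smul_comm, mul_smul_comm, ← mul_assoc, ← pow_succ, mul_one]
      rw [h2]
      have h3 : Pz q ^ n * Pz q = Pz q ^ (n + 1) := (pow_succ _ _).symm
      rw [h3]
      module

lemma span_eq_top (q : ℝ) :
    Submodule.span ℂ (Set.range fun jk : ℕ × ℕ => Pz q ^ jk.1 * Pw q ^ jk.2) = ⊤ := by
  set v : ℕ × ℕ → PolC q := fun jk => Pz q ^ jk.1 * Pw q ^ jk.2 with hv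
  set S := Submodule.span ℂ (Set.range v) with hS
  have hmem : ∀ j k, Pz q ^ j * Pw q ^ k ∈ S :=
    fun j k => Submodule.subset_span ⟨(j, k), rfl⟩
  have hz : ∀ s ∈ S, Pz q * s ∈ S := by
    intro s hs
    induction hs using Submodule.span_induction with
    | mem x hx =>
        obtain ⟨⟨j, k⟩, rfl⟩ := hx
        have : Pz q * v (j, k) = Pz q ^ (j + 1) * Pw q ^ k := by
          rw [hv]; rw [← mul_assoc, ← pow_succ']
        rw [this]; exact hmem _ _
    | zero => simpa using S.zero_mem
    | add x y _ _ hx hy => rw [mul_add]; exact S.add_mem hx hy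
    | smul c x _ hx => rw [mul_smul_comm]; exact S.smul_mem c hx
  have hw : ∀ s ∈ S, Pw q * s ∈ S := by
    intro s hs
    induction hs using Submodule.span_induction with
    | mem x hx =>
        obtain ⟨⟨j, k⟩, rfl⟩ := hx
        cases j with
        | zero =>
            have : Pw q * v (0, k) = Pz q ^ 0 * Pw q ^ (k + 1) := by
              rw [hv]; simp [← pow_succ']
            rw [this]; exact hmem _ _
        | succ n =>
            have : Pw q * v (n + 1, k) =
                ((q : ℂ) ^ (2 * (n + 1))) • (Pz q ^ (n + 1) * Pw q ^ (k + 1))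
                  + (1 - (q : ℂ) ^ (2 * (n + 1))) • (Pz q ^ n * Pw q ^ k) := by
              rw [hv]
              show Pw q * (Pz q ^ (n + 1) * Pw q ^ k) = _
              rw [← mul_assoc, wz_pow q n, add_mul, smul_mul_assoc, smul_mul_assoc,
                mul_assoc, ← pow_succ']
            rw [this]
            exact S.add_mem (S.smul_mem _ (hmem _ _)) (S.smul_mem _ (hmem _ _))
    | zero => simpa using S.zero_mem
    | add x y _ _ hx hy => rw [mul_add]; exact S.add_mem hx hy
    | smul c x _ hx => rw [mul_smul_comm]; exact S.smul_mem c hx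
  have key : ∀ a : FreeAlgebra ℂ (Fin 2), ∀ s ∈ S,
      RingQuot.mkAlgHom ℂ (PolRel q) a * s ∈ S := by
    intro a
    induction a using FreeAlgebra.induction with
    | grade0 r =>
        intro s hs
        rw [AlgHom.commutes]
        rw [Algebra.algebraMap_eq_smul_one, smul_mul_assoc, one_mul]
        exact S.smul_mem r hs
    | grade1 i =>
        intro s hs
        fin_cases i
        · exact hz s hs
        · exact hw s hs
    | mul x y hx hy =>
        intro s hs
        rw [map_mul, mul_assoc]
        exact hx _ (hy s hs)
    | add x y hx hy =>
        intro s hs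
        rw [map_add, add_mul]
        exact S.add_mem (hx s hs) (hy s hs)
  have hone : (1 : PolC q) ∈ S := by simpa using hmem 0 0
  rw [eq_top_iff]
  intro x _
  obtain ⟨a, rfl⟩ := RingQuot.mkAlgHom_surjective ℂ (PolRel q) x
  simpa using key a 1 hone

end PolAux
end

theorem monomials_form_basis (q : ℝ) (hq0 : 0 < q) (hq1 : q < 1) :
    LinearIndependent ℂ (fun jk : ℕ × ℕ => Pz q ^ jk.1 * Pw q ^ jk.2) ∧
    Submodule.span ℂ (Set.range fun jk : ℕ × ℕ => Pz q ^ jk.1 * Pw q ^ jk.2) = ⊤ :=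
  ⟨PolAux.linind q, PolAux.span_eq_top q⟩
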